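/- The crawl value function V satisfies V(0) = 0 and V(ι) > 0 for every ι > 0. -/

import Mathlib

open Real Finset

/-- Normalized residual of the `i`-th Taylor approximation of the exponential:
`R_i(x) = (exp x − ∑_{j=0}^{i} x^j/j!) / exp x`. -/
noncomputable def Rres (i : ℕ) (x : ℝ) : ℝ :=
  (Real.exp x - ∑ j ∈ Finset.range (i + 1), x ^ j / (Nat.factorial j : ℝ)) / Real.exp x

/-- Expected crawl-interval length `ψ(ι) = ∑_{i=0}^{⌊ι/β⌋} (1/γ)·R_i(γ(ι − iβ))`. -/
noncomputable def psi (γ β : ℝ) (ι : ℝ) : ℝ :=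
  ∑ i ∈ Finset.range (⌊ι / β⌋₊ + 1), (1 / γ) * Rres i (γ * (ι - (i : ℝ) * β))

/-- Expected cumulative freshness `w(ι) = ∑_{i=0}^{⌊ι/β⌋} (ν^i/(Δ+ν)^{i+1})·R_i((α+γ)(ι − iβ))`. -/
noncomputable def wfun (α β γ ν Δ : ℝ) (ι : ℝ) : ℝ :=
  ∑ i ∈ Finset.range (⌊ι / β⌋₊ + 1),
    (ν ^ i / (Δ + ν) ^ (i + 1)) * Rres i ((α + γ) * (ι - (i : ℝ) * β))

/-- Crawl value function `V(ι) = μ̃·(w(ι) − exp(−αι)·ψ(ι))`. -/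
noncomputable def Vfun (μ α β γ ν Δ : ℝ) (ι : ℝ) : ℝ :=
  μ * (wfun α β γ ν Δ ι - Real.exp (-(α * ι)) * psi γ β ι)

lemma Rres_eq (i : ℕ) (x : ℝ) :
    Rres i x = Real.exp (-x) * ∑' j : ℕ, x ^ (j + (i + 1)) / (Nat.factorial (j + (i + 1)) : ℝ) := by
  have hs := Real.summable_pow_div_factorial x
  have hexp : Real.exp x = ∑' n : ℕ, x ^ n / (Nat.factorial n : ℝ) := by
    rw [Real.exp_eq_exp_ℝ, NormedSpace.exp_eq_tsum_div]
  have h := hs.sum_add_tsum_nat_add (f := fun n => x ^ n / (Nat.factorial n : ℝ)) (i + 1)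
  rw [Rres, Real.exp_neg, div_eq_inv_mul, hexp, ← h]
  rw [add_sub_cancel_left]

lemma summable_shift (x : ℝ) (k : ℕ) :
    Summable (fun j : ℕ => x ^ (j + k) / (Nat.factorial (j + k) : ℝ)) :=
  ((summable_nat_add_iff k).2 (Real.summable_pow_div_factorial x))

lemma term_le (α γ : ℝ) (hα : 0 < α) (hγ : 0 < γ) (i j : ℕ) {t : ℝ} (ht : 0 ≤ t) :
    (γ * t) ^ (j + (i + 1)) / (Nat.factorial (j + (i + 1)) : ℝ) ≤
      (γ / (α + γ)) ^ (i + 1) * (((α + γ) * t) ^ (j + (i + 1)) / (Nat.factorial (j + (i + 1)) : ℝ)) := by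
  have hag : 0 < α + γ := by linarith
  have key : (γ * t) ^ (j + (i + 1)) ≤ (γ / (α + γ)) ^ (i + 1) * ((α + γ) * t) ^ (j + (i + 1)) := by
    have heq : (γ / (α + γ)) ^ (i + 1) * ((α + γ) * t) ^ (j + (i + 1)) =
        γ ^ (i + 1) * (α + γ) ^ j * t ^ (j + (i + 1)) := by
      rw [div_pow, mul_pow, pow_add _ j (i + 1)]
      field_simp
    rw [heq, mul_pow]
    have h1 : γ ^ (j + (i + 1)) = γ ^ (i + 1) * γ ^ j := by rw [← pow_add]; ring_nf
    rw [h1]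
    exact mul_le_mul_of_nonneg_right (mul_le_mul_of_nonneg_left
      (pow_le_pow_left₀ hγ.le (by linarith) j) (pow_nonneg hγ.le _)) (pow_nonneg ht _)
  rw [← mul_div_assoc]
  have hf : (0:ℝ) < (Nat.factorial (j + (i + 1)) : ℝ) := by positivity
  exact (div_le_div_iff_of_pos_right hf).2 key

lemma term_lt (α γ : ℝ) (hα : 0 < α) (hγ : 0 < γ) (i : ℕ) {t : ℝ} (ht : 0 < t) :
    (γ * t) ^ (1 + (i + 1)) / (Nat.factorial (1 + (i + 1)) : ℝ) <
      (γ / (α + γ)) ^ (i + 1) * (((α + γ) * t) ^ (1 + (i + 1)) / (Nat.factorial (1 + (i + 1)) : ℝ)) := by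
  have hag : 0 < α + γ := by linarith
  have key : (γ * t) ^ (1 + (i + 1)) < (γ / (α + γ)) ^ (i + 1) * ((α + γ) * t) ^ (1 + (i + 1)) := by
    have heq : (γ / (α + γ)) ^ (i + 1) * ((α + γ) * t) ^ (1 + (i + 1)) =
        γ ^ (i + 1) * (α + γ) ^ 1 * t ^ (1 + (i + 1)) := by
      rw [div_pow, mul_pow, pow_add _ 1 (i + 1)]
      field_simp
    rw [heq, mul_pow]
    have h1 : γ ^ (1 + (i + 1)) = γ ^ (i + 1) * γ ^ 1 := by rw [← pow_add]; ring_nf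
    rw [h1]
    exact mul_lt_mul_of_pos_right (mul_lt_mul_of_pos_left
      (by simpa using (by linarith : γ < α + γ)) (pow_pos hγ _)) (pow_pos ht _)
  rw [← mul_div_assoc]
  have hf : (0:ℝ) < (Nat.factorial (1 + (i + 1)) : ℝ) := by positivity
  exact (div_lt_div_iff_of_pos_right hf).2 key

lemma key_le (α γ : ℝ) (hα : 0 < α) (hγ : 0 < γ) (i : ℕ) {t : ℝ} (ht : 0 ≤ t) :
    Real.exp (-(α * t)) * Rres i (γ * t) ≤ (γ / (α + γ)) ^ (i + 1) * Rres i ((α + γ) * t) := by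
  have hag : 0 < α + γ := by linarith
  rw [Rres_eq, Rres_eq]
  have e1 : Real.exp (-(α * t)) * (Real.exp (-(γ * t)) *
      ∑' j : ℕ, (γ * t) ^ (j + (i + 1)) / (Nat.factorial (j + (i + 1)) : ℝ)) =
      Real.exp (-((α + γ) * t)) *
      ∑' j : ℕ, (γ * t) ^ (j + (i + 1)) / (Nat.factorial (j + (i + 1)) : ℝ) := by
    rw [← mul_assoc, ← Real.exp_add]; congr 2; ring
  rw [e1, ← mul_assoc, mul_comm ((γ / (α + γ)) ^ (i + 1)), mul_assoc]
  apply mul_le_mul_of_nonneg_left _ (Real.exp_pos _).le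
  rw [← tsum_mul_left]
  exact Summable.tsum_le_tsum (fun j => term_le α γ hα hγ i j ht) (summable_shift _ _)
    ((summable_shift _ _).mul_left _)

lemma key_lt (α γ : ℝ) (hα : 0 < α) (hγ : 0 < γ) (i : ℕ) {t : ℝ} (ht : 0 < t) :
    Real.exp (-(α * t)) * Rres i (γ * t) < (γ / (α + γ)) ^ (i + 1) * Rres i ((α + γ) * t) := by
  have hag : 0 < α + γ := by linarith
  rw [Rres_eq, Rres_eq]
  have e1 : Real.exp (-(α * t)) * (Real.exp (-(γ * t)) *
      ∑' j : ℕ, (γ * t) ^ (j + (i + 1)) / (Nat.factorial (j + (i + 1)) : ℝ)) =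
      Real.exp (-((α + γ) * t)) *
      ∑' j : ℕ, (γ * t) ^ (j + (i + 1)) / (Nat.factorial (j + (i + 1)) : ℝ) := by
    rw [← mul_assoc, ← Real.exp_add]; congr 2; ring
  rw [e1, ← mul_assoc, mul_comm ((γ / (α + γ)) ^ (i + 1)), mul_assoc]
  apply mul_lt_mul_of_pos_left _ (Real.exp_pos _)
  rw [← tsum_mul_left]
  refine Summable.tsum_lt_tsum_of_nonneg (i := 1) (fun j => by positivity)
    (fun j => term_le α γ hα hγ i j ht.le) (term_lt α γ hα hγ i ht)
    ((summable_shift _ _).mul_left _)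

lemma main_term_le (α β γ ν Δ ι : ℝ) (hα : 0 < α) (hβ : 0 < β) (hγ : 0 < γ)
    (hrates : α + γ = Δ + ν) (hnu : ν = γ * Real.exp (-(α * β))) (i : ℕ)
    (hle : 0 ≤ ι - (i : ℝ) * β) :
    Real.exp (-(α * ι)) * ((1 / γ) * Rres i (γ * (ι - (i : ℝ) * β))) ≤
      (ν ^ i / (Δ + ν) ^ (i + 1)) * Rres i ((α + γ) * (ι - (i : ℝ) * β)) := by
  set t := ι - (i : ℝ) * β with htdef
  set E := Real.exp (-(α * β)) with hE
  have hEpos : 0 < E := Real.exp_pos _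
  have hexp : Real.exp (-(α * ι)) = Real.exp (-(α * t)) * E ^ i := by
    rw [hE, ← Real.exp_nat_mul, ← Real.exp_add]
    congr 1
    rw [htdef]; ring
  have hkey := key_le α γ hα hγ i hle
  have h2 := mul_le_mul_of_nonneg_left hkey (le_of_lt (by positivity : (0:ℝ) < E ^ i / γ))
  calc Real.exp (-(α * ι)) * ((1 / γ) * Rres i (γ * t))
      = E ^ i / γ * (Real.exp (-(α * t)) * Rres i (γ * t)) := by rw [hexp]; ring
    _ ≤ E ^ i / γ * ((γ / (α + γ)) ^ (i + 1) * Rres i ((α + γ) * t)) := h2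
    _ = (ν ^ i / (Δ + ν) ^ (i + 1)) * Rres i ((α + γ) * t) := by
        have hs : Δ + γ * E = α + γ := by rw [← hnu, ← hrates]
        rw [hnu, hs, mul_pow, div_pow]
        have : (0:ℝ) < α + γ := by linarith
        field_simp
        ring

lemma main_term_lt (α β γ ν Δ ι : ℝ) (hα : 0 < α) (hβ : 0 < β) (hγ : 0 < γ)
    (hrates : α + γ = Δ + ν) (hnu : ν = γ * Real.exp (-(α * β))) (i : ℕ)
    (hlt : 0 < ι - (i : ℝ) * β) :
    Real.exp (-(α * ι)) * ((1 / γ) * Rres i (γ * (ι - (i : ℝ) * β))) <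
      (ν ^ i / (Δ + ν) ^ (i + 1)) * Rres i ((α + γ) * (ι - (i : ℝ) * β)) := by
  set t := ι - (i : ℝ) * β with htdef
  set E := Real.exp (-(α * β)) with hE
  have hEpos : 0 < E := Real.exp_pos _
  have hexp : Real.exp (-(α * ι)) = Real.exp (-(α * t)) * E ^ i := by
    rw [hE, ← Real.exp_nat_mul, ← Real.exp_add]
    congr 1
    rw [htdef]; ring
  have hkey := key_lt α γ hα hγ i hlt
  have h2 := mul_lt_mul_of_pos_left hkey (by positivity : (0:ℝ) < E ^ i / γ)
  calc Real.exp (-(α * ι)) * ((1 / γ) * Rres i (γ * t))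
      = E ^ i / γ * (Real.exp (-(α * t)) * Rres i (γ * t)) := by rw [hexp]; ring
    _ < E ^ i / γ * ((γ / (α + γ)) ^ (i + 1) * Rres i ((α + γ) * t)) := h2
    _ = (ν ^ i / (Δ + ν) ^ (i + 1)) * Rres i ((α + γ) * t) := by
        have hs : Δ + γ * E = α + γ := by rw [← hnu, ← hrates]
        rw [hnu, hs, mul_pow, div_pow]
        have : (0:ℝ) < α + γ := by linarith
        field_simp
        ring

/-- The crawl value function `V` satisfies `V(0) = 0` and `V(ι) > 0` for every `ι > 0`. -/
theorem stmt_11 (μ α β γ ν Δ : ℝ) (hμ : 0 < μ) (hα : 0 < α) (hβ : 0 < β) (hγ : 0 < γ)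
    (hν : 0 < ν) (hΔ : 0 < Δ) (hrates : α + γ = Δ + ν) (hnu : ν = γ * Real.exp (-(α * β))) :
    Vfun μ α β γ ν Δ 0 = 0 ∧ ∀ ι : ℝ, 0 < ι → 0 < Vfun μ α β γ ν Δ ι := by
  constructor
  · simp [Vfun, wfun, psi, Rres]
  · intro ι hι
    apply mul_pos hμ
    rw [sub_pos, psi, Finset.mul_sum, wfun]
    apply Finset.sum_lt_sum
    · intro i hi
      have hi' : i ≤ ⌊ι / β⌋₊ := Nat.lt_succ_iff.mp (Finset.mem_range.mp hi)
      have h1 : (i : ℝ) ≤ ι / β := le_trans (Nat.cast_le.mpr hi') (Nat.floor_le (by positivity))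
      have hle : 0 ≤ ι - (i : ℝ) * β := by
        have := (le_div_iff₀ hβ).mp h1
        linarith
      exact main_term_le α β γ ν Δ ι hα hβ hγ hrates hnu i hle
    · refine ⟨0, Finset.mem_range.mpr (Nat.succ_pos _), ?_⟩
      have hlt : 0 < ι - ((0 : ℕ) : ℝ) * β := by simp [hι]
      exact main_term_lt α β γ ν Δ ι hα hβ hγ hrates hnu 0 hlt
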